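/- Let v = (α, e^u) ∈ ℝ² × ℝ² with ‖e^u‖ = 1 and ‖α − λ^N p‖ ≤ λ^{2N}, where p = P_x(e^u) ≠ 0 and v_x denotes the first coordinate of v. Then λ^N(‖p‖ − 3λ^N) ≤ |v_x|/‖v‖ ≤ λ^N(‖p‖ + 3λ^N), provided N is large enough (e.g. λ^N(‖p‖+1) ≤ 1/2). -/
import Mathlib

lemma coord_le_norm (x : EuclideanSpace ℝ (Fin 2)) (i : Fin 2) : |x i| ≤ ‖x‖ := by
  rw [EuclideanSpace.norm_eq]
  have : |x i| = Real.sqrt (‖x i‖ ^ 2) := by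
    rw [Real.sqrt_sq_eq_abs]; simp
  rw [this]
  apply Real.sqrt_le_sqrt
  exact Finset.single_le_sum (f := fun j => ‖x j‖ ^ 2) (fun j _ => by positivity) (by simp)

set_option maxHeartbeats 1600000 in
/-- Let `v = (α, e^u) ∈ ℝ² × ℝ²` (with the Euclidean norm on `ℝ⁴`), `‖e^u‖ = 1`,
`p = P_x(e^u) ≠ 0`, and `‖α − λ^N p‖ ≤ λ^{2N}`.  If `N` is large enough that
`λ^N(‖p‖+1) ≤ 1/2`, then `λ^N(‖p‖ − 3λ^N) ≤ |v_x|/‖v‖ ≤ λ^N(‖p‖ + 3λ^N)`,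
where `v_x = α 0` is the first coordinate of `v`. -/
theorem stmt7 (N : ℕ) (lam : ℝ) (hlam : 0 < lam) (hlam1 : lam < 1)
    (eu α p : EuclideanSpace ℝ (Fin 2)) (heu : ‖eu‖ = 1)
    (hp : p 0 = eu 0 ∧ p 1 = 0) (hpne : p ≠ 0)
    (hα : ‖α - lam ^ N • p‖ ≤ lam ^ (2 * N))
    (hNbig : lam ^ N * (‖p‖ + 1) ≤ 1 / 2) :
    lam ^ N * (‖p‖ - 3 * lam ^ N) ≤
        |α 0| / ‖(WithLp.equiv 2
          (EuclideanSpace ℝ (Fin 2) × EuclideanSpace ℝ (Fin 2))).symm (α, eu)‖ ∧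
      |α 0| / ‖(WithLp.equiv 2
          (EuclideanSpace ℝ (Fin 2) × EuclideanSpace ℝ (Fin 2))).symm (α, eu)‖ ≤
        lam ^ N * (‖p‖ + 3 * lam ^ N) := by
  set t : ℝ := lam ^ N with htdef
  have ht0 : 0 < t := pow_pos hlam N
  have ht2 : lam ^ (2 * N) = t ^ 2 := by rw [mul_comm, pow_mul]
  rw [ht2] at hα
  -- ‖p‖ = |p 0|
  have hpn : ‖p‖ = |p 0| := by
    rw [EuclideanSpace.norm_eq]
    rw [show (Finset.univ : Finset (Fin 2)) = {0, 1} by decide]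
    rw [Finset.sum_insert (by decide), Finset.sum_singleton, hp.2]
    simp [Real.sqrt_sq_eq_abs]
  have hpge : 0 < ‖p‖ := norm_pos_iff.mpr hpne
  have hple : ‖p‖ ≤ 1 := by
    rw [hpn, hp.1, ← heu]; exact coord_le_norm eu 0
  have ht : t ≤ 1 / 2 := by nlinarith
  -- coordinate bound
  have hc : |α 0 - t * p 0| ≤ t ^ 2 := by
    have := coord_le_norm (α - lam ^ N • p) 0
    simpa [htdef] using this.trans hα
  have hlow : t * ‖p‖ - t ^ 2 ≤ |α 0| := by
    have h1 : |t * p 0| - |α 0| ≤ |t * p 0 - α 0| := abs_sub_abs_le_abs_sub _ _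
    rw [abs_sub_comm] at h1
    have : |t * p 0| = t * ‖p‖ := by rw [hpn, abs_mul, abs_of_pos ht0]
    linarith
  have hhigh : |α 0| ≤ t * ‖p‖ + t ^ 2 := by
    have h1 : |α 0| - |t * p 0| ≤ |α 0 - t * p 0| := abs_sub_abs_le_abs_sub _ _
    have : |t * p 0| = t * ‖p‖ := by rw [hpn, abs_mul, abs_of_pos ht0]
    linarith
  -- norm of α
  have hαn : ‖α‖ ≤ t * ‖p‖ + t ^ 2 := by
    calc ‖α‖ ≤ ‖α - lam ^ N • p‖ + ‖lam ^ N • p‖ := by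
          simpa using norm_add_le (α - lam ^ N • p) (lam ^ N • p)
      _ ≤ t ^ 2 + t * ‖p‖ := by
          rw [norm_smul, Real.norm_eq_abs, ← htdef, abs_of_pos ht0]
          linarith
      _ = t * ‖p‖ + t ^ 2 := by ring
  -- norm of v
  set v := (WithLp.equiv 2
      (EuclideanSpace ℝ (Fin 2) × EuclideanSpace ℝ (Fin 2))).symm (α, eu) with hvdef
  have hvsq : ‖v‖ ^ 2 = ‖α‖ ^ 2 + 1 := by
    rw [hvdef, WithLp.prod_norm_sq_eq_of_L2]
    simp [heu]
  have hv0 : 0 ≤ ‖v‖ := norm_nonneg _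
  have hv1 : 1 ≤ ‖v‖ := by nlinarith [sq_nonneg ‖α‖]
  have hα12 : ‖α‖ ≤ 2 * t := by nlinarith
  have hαsq : ‖α‖ ^ 2 ≤ 4 * t ^ 2 := by nlinarith [norm_nonneg α]
  have hv2 : ‖v‖ ≤ 1 + 2 * t ^ 2 := by nlinarith [sq_nonneg t]
  constructor
  · rcases le_or_gt (t * (‖p‖ - 3 * t)) 0 with h | h
    · exact h.trans (by positivity)
    · rw [le_div_iff₀ (by linarith)]
      have h2 := mul_le_mul_of_nonneg_left hv2 h.le
      have key : t * (‖p‖ - 3 * t) * (1 + 2 * t ^ 2) ≤ t * ‖p‖ - t ^ 2 := by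
        have h3 : 2 * t ^ 3 * ‖p‖ ≤ 2 * t ^ 3 := by nlinarith [pow_pos ht0 3]
        nlinarith [pow_pos ht0 2, pow_pos ht0 3, pow_pos ht0 4]
      linarith
  · rw [div_le_iff₀ (by linarith)]
    have h01 : (0:ℝ) ≤ t * (‖p‖ + 3 * t) := by positivity
    have h2 := mul_le_mul_of_nonneg_left hv1 h01
    nlinarith [mul_pos ht0 ht0]
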